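/- Let n ≥ 1, d ≥ 1. There exists a constant c > 0 depending only on n and d such that for every normalized polynomial P of degree d in ℂⁿ with H = {z : P(z) = 0}, and every v ∈ Q with dist(v, H) ≥ 2ρ(n,d) = 1/(2(16(d+n))^n), one has |P(v)| ≥ c. -/

import Mathlib

set_option maxHeartbeats 1000000


noncomputable section

def unitCube (n : ℕ) : Set (EuclideanSpace ℂ (Fin n)) :=
  {z | ∀ i, (z i).re ∈ Set.Icc (0:ℝ) 1 ∧ (z i).im ∈ Set.Icc (0:ℝ) 1}

def mvNorm {n : ℕ} (P : MvPolynomial (Fin n) ℂ) : ℝ :=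
  ∑ α ∈ P.support, ‖P.coeff α‖

def zeroSet {n : ℕ} (P : MvPolynomial (Fin n) ℂ) : Set (EuclideanSpace ℂ (Fin n)) :=
  {z | MvPolynomial.eval (fun i => z i) P = 0}

def Qr (n : ℕ) (H : Set (EuclideanSpace ℂ (Fin n))) (r : ℝ) : Set (EuclideanSpace ℂ (Fin n)) :=
  unitCube n \ {z | Metric.infDist z H ≤ r}

def polyNorm (p : Polynomial ℂ) : ℝ := ∑ k ∈ p.support, ‖p.coeff k‖

def lineRestrict {n : ℕ} (P : MvPolynomial (Fin n) ℂ) (b w : EuclideanSpace ℂ (Fin n)) :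
    Polynomial ℂ :=
  MvPolynomial.aeval (fun i => Polynomial.C (b i) + Polynomial.C (w i) * Polynomial.X) P

def lineSet {n : ℕ} (b w : EuclideanSpace ℂ (Fin n)) : Set (EuclideanSpace ℂ (Fin n)) :=
  {z | ∃ t : ℂ, z = b + t • w}

open Polynomial

lemma polyNorm_eq_range {p : ℂ[X]} {N : ℕ} (h : p.natDegree < N) :
    polyNorm p = ∑ k ∈ Finset.range N, ‖p.coeff k‖ := by
  refine Finset.sum_subset (Polynomial.supp_subset_range h) ?_
  intro x _ hx
  simp [Polynomial.notMem_support_iff.mp hx]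

lemma polyNorm_nonneg (p : ℂ[X]) : 0 ≤ polyNorm p :=
  Finset.sum_nonneg fun _ _ => norm_nonneg _

lemma abs_eval_one_le (p : ℂ[X]) : ‖p.eval 1‖ ≤ polyNorm p := by
  rw [Polynomial.eval_eq_sum, Polynomial.sum_def]
  refine le_trans (norm_sum_le _ _) (le_of_eq ?_)
  simp [polyNorm]

lemma polyNorm_C_mul (a : ℂ) (p : ℂ[X]) :
    polyNorm (C a * p) ≤ ‖a‖ * polyNorm p := by
  rcases eq_or_ne p 0 with rfl | hp
  · simp [polyNorm]
  have h1 : (C a * p).natDegree < p.natDegree + 1 :=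
    Nat.lt_succ_of_le (Polynomial.natDegree_C_mul_le a p)
  rw [polyNorm_eq_range h1, polyNorm_eq_range (Nat.lt_succ_self _), Finset.mul_sum]
  refine le_of_eq (Finset.sum_congr rfl fun k _ => ?_)
  simp [Polynomial.coeff_C_mul]

lemma polyNorm_linear_mul (a : ℂ) (p : ℂ[X]) :
    polyNorm ((X - C a) * p) ≤ (1 + ‖a‖) * polyNorm p := by
  rcases eq_or_ne p 0 with rfl | hp
  · simp [polyNorm]
  have hd : ((X - C a) * p).natDegree < p.natDegree + 2 := by
    have := Polynomial.natDegree_mul_le (p := X - C a) (q := p)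
    have h2 : (X - C a).natDegree ≤ 1 := Polynomial.natDegree_X_sub_C_le a
    omega
  rw [polyNorm_eq_range hd]
  have hco : ∀ k, ((X - C a) * p).coeff k = (X * p).coeff k - a * p.coeff k := by
    intro k; rw [sub_mul, Polynomial.coeff_sub, Polynomial.coeff_C_mul]
  have step1 : ∑ k ∈ Finset.range (p.natDegree + 2), ‖((X - C a) * p).coeff k‖
      ≤ ∑ k ∈ Finset.range (p.natDegree + 2),
          (‖(X * p).coeff k‖ + ‖a * p.coeff k‖) := by
    refine Finset.sum_le_sum fun k _ => ?_
    rw [hco k]; exact norm_sub_le _ _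
  have step2 : (∑ k ∈ Finset.range (p.natDegree + 2), ‖(X * p).coeff k‖)
      ≤ polyNorm p := by
    have hrw := Finset.sum_range_succ' (fun k => ‖(X * p).coeff k‖) (p.natDegree + 1)
    rw [show p.natDegree + 2 = p.natDegree + 1 + 1 from rfl, hrw]
    have h0 : (X * p).coeff 0 = 0 := by simp [Polynomial.mul_coeff_zero]
    rw [h0]
    simp only [norm_zero, add_zero]
    refine le_of_eq ?_
    rw [polyNorm_eq_range (Nat.lt_succ_self p.natDegree)]
    refine (Finset.sum_congr rfl fun k _ => ?_).symm
    rw [Polynomial.coeff_X_mul]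
  have step3 : (∑ k ∈ Finset.range (p.natDegree + 2), ‖a * p.coeff k‖)
      ≤ ‖a‖ * polyNorm p := by
    rw [polyNorm_eq_range (show p.natDegree < p.natDegree + 2 by omega), Finset.mul_sum]
    refine le_of_eq (Finset.sum_congr rfl fun k _ => ?_)
    simp
  rw [Finset.sum_add_distrib] at step1
  have := add_le_add step2 step3
  nlinarith [this, step1]

lemma polyNorm_prod_roots (m : Multiset ℂ) :
    polyNorm ((m.map (fun a => X - C a)).prod) ≤ (m.map (fun a => 1 + ‖a‖)).prod := by
  induction m using Multiset.induction with
  | empty =>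
    simp only [Multiset.map_zero, Multiset.prod_zero]
    rw [polyNorm_eq_range (N := 1) (by simp)]
    simp
  | cons a s ih =>
    simp only [Multiset.map_cons, Multiset.prod_cons]
    calc polyNorm ((X - C a) * (s.map (fun a => X - C a)).prod)
        ≤ (1 + ‖a‖) * polyNorm ((s.map (fun a => X - C a)).prod) :=
          polyNorm_linear_mul _ _
      _ ≤ (1 + ‖a‖) * (s.map (fun a => 1 + ‖a‖)).prod :=
          mul_le_mul_of_nonneg_left ih (by positivity)

lemma pow_le_multiset_prod (b : ℝ) (hb0 : 0 ≤ b) (m : Multiset ℝ)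
    (h : ∀ x ∈ m, b ≤ x) : b ^ Multiset.card m ≤ m.prod := by
  induction m using Multiset.induction with
  | empty => simp
  | cons a s ih =>
    have ha := h a (Multiset.mem_cons_self a s)
    have ihs := ih (fun x hx => h x (Multiset.mem_cons_of_mem hx))
    simp only [Multiset.card_cons, Multiset.prod_cons, pow_succ]
    calc b ^ Multiset.card s * b ≤ s.prod * a := by
          exact mul_le_mul ihs ha hb0 (le_trans (pow_nonneg hb0 _) ihs)
      _ = a * s.prod := mul_comm _ _

lemma key1 {q : ℂ[X]} (hq : q ≠ 0) {d : ℕ} (hdeg : q.natDegree ≤ d) {r : ℝ} (hr : 0 < r)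
    (hroots : ∀ t : ℂ, q.IsRoot t → r ≤ ‖t‖) :
    (r / (1 + r)) ^ d * polyNorm q ≤ ‖q.eval 0‖ := by
  set m := q.roots with hm
  have hfac : q = C q.leadingCoeff * (m.map (fun a => X - C a)).prod :=
    (IsAlgClosed.splits q).eq_prod_roots
  set lc := q.leadingCoeff
  -- eval at 0
  have heval : ‖q.eval 0‖
      = ‖lc‖ * (m.map (fun a => ‖a‖)).prod := by
    conv_lhs => rw [hfac]
    rw [Polynomial.eval_mul, Polynomial.eval_C, norm_mul, Polynomial.eval_multiset_prod]
    congr 1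
    rw [Multiset.map_map, show ∀ s : Multiset ℂ, ‖s.prod‖ = (s.map (‖·‖)).prod from
      fun s => map_multiset_prod (normHom : ℂ →*₀ ℝ) s, Multiset.map_map]
    refine congrArg Multiset.prod (Multiset.map_congr rfl fun a _ => ?_)
    simp
  -- norm bound
  have hnorm : polyNorm q ≤ ‖lc‖ * (m.map (fun a => 1 + ‖a‖)).prod := by
    conv_lhs => rw [hfac]
    exact le_trans (polyNorm_C_mul _ _)
      (mul_le_mul_of_nonneg_left (polyNorm_prod_roots m) (norm_nonneg _))
  -- core product inequality
  have hb0 : 0 ≤ r / (1 + r) := by positivity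
  have hb1 : r / (1 + r) ≤ 1 := by
    rw [div_le_one (by linarith)]; linarith
  have hcard : Multiset.card m ≤ d := le_trans (Polynomial.card_roots' q) hdeg
  have hfac2 : ∀ a ∈ m, r / (1 + r) ≤ ‖a‖ / (1 + ‖a‖) := by
    intro a ha
    have hra : r ≤ ‖a‖ := hroots a (Polynomial.isRoot_of_mem_roots ha)
    rw [div_le_div_iff₀ (by linarith) (by positivity)]
    nlinarith
  have hcore : (r / (1 + r)) ^ d ≤ (m.map (fun a => ‖a‖ / (1 + ‖a‖))).prod := by
    calc (r / (1 + r)) ^ d ≤ (r / (1 + r)) ^ Multiset.card m :=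
          pow_le_pow_of_le_one hb0 hb1 hcard
      _ = (r / (1 + r)) ^ Multiset.card (m.map (fun a => ‖a‖ / (1 + ‖a‖))) := by
          rw [Multiset.card_map]
      _ ≤ _ := pow_le_multiset_prod _ hb0 _ (by
          intro x hx
          obtain ⟨a, ha, rfl⟩ := Multiset.mem_map.mp hx
          exact hfac2 a ha)
  have hprodeq : (m.map (fun a => ‖a‖ / (1 + ‖a‖))).prod
      * (m.map (fun a => 1 + ‖a‖)).prod = (m.map (fun a => ‖a‖)).prod := by
    rw [← Multiset.prod_map_mul]
    congr 1
    refine Multiset.map_congr rfl fun a _ => ?_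
    field_simp
  have hpn : 0 ≤ (m.map (fun a => 1 + ‖a‖)).prod := by
    refine Multiset.prod_nonneg fun x hx => ?_
    obtain ⟨a, _, rfl⟩ := Multiset.mem_map.mp hx
    positivity
  calc (r / (1 + r)) ^ d * polyNorm q
      ≤ (r / (1 + r)) ^ d * (‖lc‖ * (m.map (fun a => 1 + ‖a‖)).prod) :=
        mul_le_mul_of_nonneg_left hnorm (pow_nonneg hb0 _)
    _ ≤ (m.map (fun a => ‖a‖ / (1 + ‖a‖))).prod
        * (‖lc‖ * (m.map (fun a => 1 + ‖a‖)).prod) := by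
        refine mul_le_mul_of_nonneg_right hcore ?_
        exact mul_nonneg (norm_nonneg _) hpn
    _ = ‖lc‖ * ((m.map (fun a => ‖a‖ / (1 + ‖a‖))).prod
        * (m.map (fun a => 1 + ‖a‖)).prod) := by ring
    _ = ‖q.eval 0‖ := by rw [hprodeq, heval]

open MvPolynomial

lemma mv_eq_zero_of_eval_zero_on (S : Set ℂ) (hS : S.Infinite) :
    ∀ {n : ℕ} (P : MvPolynomial (Fin n) ℂ),
      (∀ z : Fin n → ℂ, (∀ i, z i ∈ S) → MvPolynomial.eval z P = 0) → P = 0 := by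
  intro n
  induction n with
  | zero =>
    intro P h
    apply (MvPolynomial.isEmptyRingEquiv ℂ (Fin 0)).injective
    rw [map_zero]
    convert h finZeroElim (fun i => i.elim0)
    rw [isEmptyRingEquiv_eq_coeff_zero, ← MvPolynomial.constantCoeff_eq, ← MvPolynomial.eval_zero']
    congr 1
    exact congrArg _ (funext fun i => i.elim0)
  | succ n ih =>
    intro P h
    apply (MvPolynomial.finSuccEquiv ℂ n).injective
    rw [map_zero]
    apply Polynomial.ext
    intro k
    rw [Polynomial.coeff_zero]
    apply ih
    intro z hz
    have hq : Polynomial.map (MvPolynomial.eval z) (finSuccEquiv ℂ n P) = 0 := by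
      apply Polynomial.eq_zero_of_infinite_isRoot
      apply hS.mono
      intro y hy
      simp only [Set.mem_setOf_eq, Polynomial.IsRoot]
      rw [← MvPolynomial.eval_eq_eval_mv_eval']
      apply h
      intro i
      refine Fin.cases ?_ ?_ i
      · simpa using hy
      · intro j; simpa using hz j
    have := congrArg (fun p => Polynomial.coeff p k) hq
    simpa [Polynomial.coeff_map] using this


def expof {n d : ℕ} (f : Fin n → Fin (d+1)) : (Fin n →₀ ℕ) :=
  Finsupp.equivFunOnFinite.symm (fun i => (f i : ℕ))

lemma expof_apply {n d : ℕ} (f : Fin n → Fin (d+1)) (i : Fin n) : expof f i = (f i : ℕ) := rfl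

lemma expof_injective {n d : ℕ} : Function.Injective (expof (n := n) (d := d)) := by
  intro f g h
  funext i
  have := congrArg (fun α => (α : Fin n →₀ ℕ) i) h
  simp only [expof_apply] at this
  exact Fin.ext this

lemma support_subset_image {n d : ℕ} (P : MvPolynomial (Fin n) ℂ) (hP : P.totalDegree ≤ d) :
    P.support ⊆ Finset.image expof (Finset.univ : Finset (Fin n → Fin (d+1))) := by
  intro α hα
  have hle : ∀ i, α i ≤ d := by
    intro i
    calc α i ≤ α.sum fun _ e => e := by
          rcases Nat.eq_zero_or_pos (α i) with h0 | h0
          · simp [h0]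
          · refine Finset.single_le_sum (f := fun i => α i) (fun _ _ => Nat.zero_le _) ?_
            exact Finsupp.mem_support_iff.mpr (by omega)
      _ ≤ P.totalDegree := MvPolynomial.le_totalDegree hα
      _ ≤ d := hP
  refine Finset.mem_image.mpr ⟨fun i => ⟨α i, Nat.lt_succ_of_le (hle i)⟩, Finset.mem_univ _, ?_⟩
  apply Finsupp.ext
  intro i
  simp [expof_apply]

def evalFun {n d : ℕ} (a : (Fin n → Fin (d+1)) → ℂ) (z : Fin n → ℂ) : ℂ :=
  ∑ f : Fin n → Fin (d+1), a f * ∏ i, z i ^ (f i : ℕ)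

lemma evalFun_eq_eval {n d : ℕ} (P : MvPolynomial (Fin n) ℂ) (hP : P.totalDegree ≤ d)
    (z : Fin n → ℂ) :
    evalFun (fun f => P.coeff (expof (d := d) f)) z = MvPolynomial.eval z P := by
  have himg : ∑ f : Fin n → Fin (d+1), P.coeff (expof f) * ∏ i, z i ^ (expof f) i
      = ∑ α ∈ Finset.image expof Finset.univ, P.coeff α * ∏ i, z i ^ α i :=
    (Finset.sum_image (s := Finset.univ) (g := expof)
      (f := fun α => P.coeff α * ∏ i, z i ^ α i)
      (fun x _ y _ h => expof_injective h)).symm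
  rw [MvPolynomial.eval_eq', evalFun]
  refine Eq.trans himg ?_
  exact (Finset.sum_subset (support_subset_image P hP) (fun α _ hα => by
    rw [MvPolynomial.notMem_support_iff.mp hα, zero_mul])).symm

lemma sum_abs_eq_mvNorm {n d : ℕ} (P : MvPolynomial (Fin n) ℂ) (hP : P.totalDegree ≤ d) :
    ∑ f : Fin n → Fin (d+1), ‖P.coeff (expof (d := d) f)‖ = mvNorm P := by
  have himg : ∑ f : Fin n → Fin (d+1), ‖P.coeff (expof f)‖
      = ∑ α ∈ Finset.image expof Finset.univ, ‖P.coeff α‖ :=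
    (Finset.sum_image (s := Finset.univ) (g := expof)
      (f := fun α => ‖P.coeff α‖)
      (fun x _ y _ h => expof_injective h)).symm
  rw [mvNorm]
  refine Eq.trans himg ?_
  exact (Finset.sum_subset (support_subset_image P hP) (fun α _ hα => by
    rw [MvPolynomial.notMem_support_iff.mp hα, norm_zero])).symm


lemma coord_abs_le {n : ℕ} {z : EuclideanSpace ℂ (Fin n)} (hz : z ∈ unitCube n) (i : Fin n) :
    ‖z i‖ ≤ 2 := by
  obtain ⟨h1, h2⟩ := hz i
  rw [Complex.norm_def, Complex.normSq_apply]
  have h4 : (z i).re * (z i).re + (z i).im * (z i).im ≤ 4 := by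
    obtain ⟨a1, a2⟩ := h1; obtain ⟨b1, b2⟩ := h2; nlinarith
  calc Real.sqrt ((z i).re * (z i).re + (z i).im * (z i).im) ≤ Real.sqrt 4 :=
        Real.sqrt_le_sqrt h4
    _ = 2 := by
        rw [show (4:ℝ) = 2^2 by norm_num, Real.sqrt_sq (by norm_num : (0:ℝ) ≤ 2)]

lemma norm_le_of_mem_cube {n : ℕ} {z : EuclideanSpace ℂ (Fin n)} (hz : z ∈ unitCube n) :
    ‖z‖ ≤ Real.sqrt (2 * n) := by
  rw [EuclideanSpace.norm_eq]
  refine Real.sqrt_le_sqrt ?_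
  calc ∑ i, ‖z i‖ ^ 2 ≤ ∑ i : Fin n, (2:ℝ) := by
        refine Finset.sum_le_sum fun i _ => ?_
        obtain ⟨⟨a1, a2⟩, ⟨b1, b2⟩⟩ := hz i
        rw [Complex.sq_norm, Complex.normSq_apply]
        nlinarith
    _ = 2 * n := by simp [mul_comm]

lemma evalFun_bound {n d : ℕ} (a : (Fin n → Fin (d+1)) → ℂ) (z : Fin n → ℂ)
    (hz : ∀ i, ‖z i‖ ≤ 2) :
    ‖evalFun a z‖ ≤ (∑ f, ‖a f‖) * 2 ^ (n * d) := by
  rw [evalFun]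
  refine le_trans (norm_sum_le _ _) ?_
  rw [Finset.sum_mul]
  refine Finset.sum_le_sum fun f _ => ?_
  rw [norm_mul]
  refine mul_le_mul_of_nonneg_left ?_ (norm_nonneg _)
  rw [norm_prod]
  calc ∏ i, ‖z i ^ (f i : ℕ)‖ ≤ ∏ i, (2:ℝ) ^ (f i : ℕ) := by
        refine Finset.prod_le_prod (fun i _ => by positivity) fun i _ => ?_
        rw [norm_pow]
        exact pow_le_pow_left₀ (norm_nonneg _) (hz i) _
    _ = 2 ^ (∑ i, (f i : ℕ)) := by rw [Finset.prod_pow_eq_pow_sum]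
    _ ≤ 2 ^ (n * d) := by
        refine pow_le_pow_right₀ (by norm_num) ?_
        calc ∑ i, (f i : ℕ) ≤ ∑ _i : Fin n, d :=
              Finset.sum_le_sum fun i _ => Nat.lt_succ_iff.mp (f i).isLt
          _ = n * d := by simp [mul_comm]

lemma exists_good_point (n d : ℕ) :
    ∃ c₂ : ℝ, 0 < c₂ ∧
      ∀ P : MvPolynomial (Fin n) ℂ, P.totalDegree ≤ d → mvNorm P = 1 →
        ∃ z ∈ unitCube n, c₂ ≤ ‖MvPolynomial.eval (fun i => z i) P‖ := by
  classical
  set K := unitCube n with hK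
  have hK0 : (0 : EuclideanSpace ℂ (Fin n)) ∈ K := by
    intro i
    constructor <;> · constructor <;> norm_num
  have hKne : K.Nonempty := ⟨0, hK0⟩
  have hKclosed : IsClosed K := by
    have hrw : K = ⋂ i : Fin n, ((fun z : EuclideanSpace ℂ (Fin n) => (z i).re) ⁻¹' Set.Icc 0 1
        ∩ (fun z : EuclideanSpace ℂ (Fin n) => (z i).im) ⁻¹' Set.Icc 0 1) := by
      ext z
      simp [hK, unitCube, Set.mem_iInter]
    rw [hrw]
    refine isClosed_iInter fun i => ?_
    have hci : Continuous fun z : EuclideanSpace ℂ (Fin n) => z i :=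
      (EuclideanSpace.proj i).continuous
    exact (isClosed_Icc.preimage (Complex.continuous_re.comp hci)).inter
      (isClosed_Icc.preimage (Complex.continuous_im.comp hci))
  have hKb : K ⊆ Metric.closedBall 0 (Real.sqrt (2*n)) := fun z hz => by
    rw [Metric.mem_closedBall, dist_zero_right]; exact norm_le_of_mem_cube hz
  have hKcomp : IsCompact K :=
    (isCompact_closedBall _ _).of_isClosed_subset hKclosed hKb
  set A : Set ((Fin n → Fin (d+1)) → ℂ) := {a | ∑ f, ‖a f‖ = 1} with hA
  have hsum_cont : Continuous fun a : (Fin n → Fin (d+1)) → ℂ => ∑ f, ‖a f‖ :=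
    continuous_finset_sum _ fun f _ => continuous_norm.comp (continuous_apply f)
  have hAclosed : IsClosed A := isClosed_eq hsum_cont continuous_const
  have hAb : A ⊆ Metric.closedBall 0 1 := by
    intro a ha
    rw [Metric.mem_closedBall, dist_zero_right]
    rw [pi_norm_le_iff_of_nonneg zero_le_one]
    intro f
    calc ‖a f‖ = ‖a f‖ := rfl
      _ ≤ ∑ g, ‖a g‖ :=
          Finset.single_le_sum (f := fun g => ‖a g‖)
            (fun g _ => norm_nonneg _) (Finset.mem_univ f)
      _ = 1 := ha
  have hAcomp : IsCompact A :=
    (isCompact_closedBall _ _).of_isClosed_subset hAclosed hAb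
  have hAne : A.Nonempty := by
    refine ⟨Pi.single (fun _ => 0) 1, ?_⟩
    simp only [hA, Set.mem_setOf_eq, Pi.single_apply, apply_ite (‖·‖), norm_one, norm_zero]
    rw [Finset.sum_ite_eq' Finset.univ]
    simp
  set Φ : ((Fin n → Fin (d+1)) → ℂ) → EuclideanSpace ℂ (Fin n) → ℂ :=
    fun a z => evalFun a (fun i => z i) with hΦ
  have hΦcont : ∀ a, Continuous fun z => ‖Φ a z‖ := by
    intro a
    apply continuous_norm.comp
    apply continuous_finset_sum
    intro f _
    refine Continuous.mul continuous_const (continuous_finset_prod _ fun i _ => ?_)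
    exact ((EuclideanSpace.proj i).continuous).pow _
  have hub : ∀ a, ∀ z ∈ K, ‖Φ a z‖ ≤ (∑ f, ‖a f‖) * 2 ^ (n * d) :=
    fun a z hz => evalFun_bound a _ (fun i => coord_abs_le hz i)
  set G : ((Fin n → Fin (d+1)) → ℂ) → ℝ := fun a => sSup ((fun z => ‖Φ a z‖) '' K)
    with hG
  have himgne : ∀ a, ((fun z => ‖Φ a z‖) '' K).Nonempty := fun a => hKne.image _
  have hbdd : ∀ a, BddAbove ((fun z => ‖Φ a z‖) '' K) := fun a =>
    ⟨(∑ f, ‖a f‖) * 2 ^ (n * d), by rintro x ⟨z, hz, rfl⟩; exact hub a z hz⟩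
  have hGge : ∀ a, ∀ z ∈ K, ‖Φ a z‖ ≤ G a := fun a z hz =>
    le_csSup (hbdd a) ⟨z, hz, rfl⟩
  have hGnonneg : ∀ a, 0 ≤ G a := fun a =>
    le_trans (norm_nonneg _) (hGge a 0 hK0)
  have hGmem : ∀ a, ∃ z ∈ K, G a = ‖Φ a z‖ := by
    intro a
    have hic := hKcomp.image_of_continuousOn ((hΦcont a).continuousOn)
    obtain ⟨z, hz, hze⟩ := hic.sSup_mem (himgne a)
    exact ⟨z, hz, hze.symm⟩
  have hΦsub : ∀ a b z, Φ a z - Φ b z = Φ (a - b) z := by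
    intro a b z
    simp only [hΦ, evalFun, ← Finset.sum_sub_distrib, Pi.sub_apply, sub_mul]
  have hlip : ∀ a b, G a ≤ G b + (∑ f, ‖(a - b) f‖) * 2 ^ (n * d) := by
    intro a b
    refine Real.sSup_le ?_ ?_
    · rintro x ⟨z, hz, rfl⟩
      have h1 : ‖Φ a z‖ ≤ ‖Φ b z‖ + ‖Φ a z - Φ b z‖ := by
        calc ‖Φ a z‖ = ‖Φ b z + (Φ a z - Φ b z)‖ := by ring_nf
          _ ≤ _ := norm_add_le _ _
      have h2 : ‖Φ a z - Φ b z‖ ≤ (∑ f, ‖(a - b) f‖) * 2 ^ (n * d) := by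
        rw [hΦsub]; exact hub (a - b) z hz
      have h3 := hGge b z hz
      linarith
    · have : (0:ℝ) ≤ (∑ f, ‖(a - b) f‖) * 2 ^ (n * d) := by positivity
      linarith [hGnonneg b]
  set C : ℝ := (Fintype.card (Fin n → Fin (d+1))) * 2 ^ (n * d) with hC
  have hC0 : 0 ≤ C := by positivity
  have hsumle : ∀ a b : (Fin n → Fin (d+1)) → ℂ,
      (∑ f, ‖(a - b) f‖) * 2 ^ (n * d) ≤ C * dist a b := by
    intro a b
    rw [hC]
    have : ∑ f, ‖(a - b) f‖ ≤ (Fintype.card (Fin n → Fin (d+1))) * dist a b := by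
      calc ∑ f, ‖(a - b) f‖ ≤ ∑ _f : Fin n → Fin (d+1), ‖a - b‖ := by
            refine Finset.sum_le_sum fun f _ => ?_
            exact norm_le_pi_norm (a - b) f
        _ = (Fintype.card (Fin n → Fin (d+1))) * ‖a - b‖ := by
            rw [Finset.sum_const, Finset.card_univ, nsmul_eq_mul]
        _ = (Fintype.card (Fin n → Fin (d+1))) * dist a b := by rw [dist_eq_norm]
    calc (∑ f, ‖(a - b) f‖) * 2 ^ (n * d)
        ≤ ((Fintype.card (Fin n → Fin (d+1))) * dist a b) * 2 ^ (n * d) := by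
          refine mul_le_mul_of_nonneg_right this (by positivity)
      _ = (Fintype.card (Fin n → Fin (d+1))) * 2 ^ (n * d) * dist a b := by ring
  have hGcont : Continuous G := by
    refine (LipschitzWith.of_dist_le_mul (K := ⟨C, hC0⟩) (f := G) ?_).continuous
    intro a b
    rw [Real.dist_eq, abs_sub_le_iff]
    change _ ≤ C * dist a b ∧ _ ≤ C * dist a b
    constructor
    · have := hlip a b
      have h2 := hsumle a b
      linarith
    · have := hlip b a
      have h2 := hsumle b a
      rw [dist_comm] at h2
      linarith
  obtain ⟨a₀, ha₀, hmin⟩ := hAcomp.exists_isMinOn hAne hGcont.continuousOn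
  refine ⟨G a₀, ?_, ?_⟩
  · rcases lt_or_ge 0 (G a₀) with h | h
    · exact h
    exfalso
    have hzero : ∀ z ∈ K, Φ a₀ z = 0 := by
      intro z hz
      have h1 := hGge a₀ z hz
      have h2 : ‖Φ a₀ z‖ = 0 := le_antisymm (by linarith) (norm_nonneg _)
      exact norm_eq_zero.mp h2
    set P₀ : MvPolynomial (Fin n) ℂ :=
      ∑ f : Fin n → Fin (d+1), MvPolynomial.monomial (expof f) (a₀ f) with hP₀
    have hev : ∀ z : Fin n → ℂ, MvPolynomial.eval z P₀ = evalFun a₀ z := by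
      intro z
      rw [hP₀, map_sum, evalFun]
      refine Finset.sum_congr rfl fun f _ => ?_
      rw [MvPolynomial.eval_monomial, Finsupp.prod_pow]
      congr 1
    have hSinf : (Set.image Complex.ofReal (Set.Icc 0 1)).Infinite :=
      Set.Infinite.image (Set.injOn_of_injective Complex.ofReal_injective)
        (Set.Icc_infinite (by norm_num))
    have hP₀0 : P₀ = 0 := by
      refine mv_eq_zero_of_eval_zero_on _ hSinf P₀ ?_
      intro z hz
      rw [hev]
      have hzK : (WithLp.toLp 2 z : EuclideanSpace ℂ (Fin n)) ∈ K := by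
        intro i
        show (z i).re ∈ _ ∧ (z i).im ∈ _
        obtain ⟨x, hx, hxe⟩ := hz i
        constructor
        · rw [← hxe]; simpa using hx
        · rw [← hxe]; simp
      have := hzero (WithLp.toLp 2 z) hzK
      simpa [hΦ] using this
    have ha₀0 : ∀ f, a₀ f = 0 := by
      intro f
      have hc : P₀.coeff (expof f) = a₀ f := by
        rw [hP₀, MvPolynomial.coeff_sum]
        rw [Finset.sum_eq_single f]
        · rw [MvPolynomial.coeff_monomial, if_pos rfl]
        · intro g _ hgf
          rw [MvPolynomial.coeff_monomial, if_neg]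
          exact fun h => hgf (expof_injective h)
        · intro h; exact absurd (Finset.mem_univ f) h
      rw [← hc, hP₀0]
      simp
    have : (1:ℝ) = 0 := by
      have hs := ha₀
      simp only [hA, Set.mem_setOf_eq] at hs
      rw [← hs]
      refine Finset.sum_eq_zero fun f _ => ?_
      rw [ha₀0 f, norm_zero]
    norm_num at this
  · intro P hPd hPn
    set a : (Fin n → Fin (d+1)) → ℂ := fun f => P.coeff (expof f) with ha
    have haA : a ∈ A := by
      simp only [hA, Set.mem_setOf_eq, ha]
      rw [sum_abs_eq_mvNorm P hPd, hPn]
    have hle : G a₀ ≤ G a := hmin haA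
    obtain ⟨z, hzK, hze⟩ := hGmem a
    refine ⟨z, hzK, ?_⟩
    have heq : Φ a z = MvPolynomial.eval (fun i => z i) P := evalFun_eq_eval P hPd _
    rw [← heq]
    rw [hze] at hle
    exact hle

open MvPolynomial


lemma lineRestrict_eval {n : ℕ} (P : MvPolynomial (Fin n) ℂ) (b w : EuclideanSpace ℂ (Fin n))
    (t : ℂ) :
    Polynomial.eval t (lineRestrict P b w) = MvPolynomial.eval (fun i => b i + w i * t) P := by
  induction P using MvPolynomial.induction_on with
  | C a => simp [lineRestrict]
  | add p q hp hq =>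
    simp only [lineRestrict] at hp hq ⊢
    rw [map_add, Polynomial.eval_add, hp, hq, map_add]
  | mul_X p i hp =>
    simp only [lineRestrict] at hp ⊢
    rw [map_mul, Polynomial.eval_mul, hp, MvPolynomial.aeval_X, map_mul, MvPolynomial.eval_X]
    simp

lemma lineRestrict_natDegree_le {n : ℕ} (P : MvPolynomial (Fin n) ℂ)
    (b w : EuclideanSpace ℂ (Fin n)) :
    (lineRestrict P b w).natDegree ≤ P.totalDegree := by
  rw [lineRestrict, MvPolynomial.aeval_def, MvPolynomial.eval₂_eq']
  refine Polynomial.natDegree_sum_le_of_forall_le _ _ fun α hα => ?_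
  calc (algebraMap ℂ (Polynomial ℂ) (P.coeff α) * ∏ i,
          (Polynomial.C (b i) + Polynomial.C (w i) * Polynomial.X) ^ α i).natDegree
      ≤ (∏ i, (Polynomial.C (b i) + Polynomial.C (w i) * Polynomial.X) ^ α i).natDegree := by
        rw [Polynomial.algebraMap_eq]
        exact Polynomial.natDegree_C_mul_le _ _
    _ ≤ ∑ i, ((Polynomial.C (b i) + Polynomial.C (w i) * Polynomial.X) ^ α i).natDegree :=
        Polynomial.natDegree_prod_le _ _
    _ ≤ ∑ i, α i * 1 := by
        refine Finset.sum_le_sum fun i _ => ?_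
        refine le_trans (Polynomial.natDegree_pow_le) ?_
        refine Nat.mul_le_mul_left _ ?_
        refine le_trans (Polynomial.natDegree_add_le _ _) ?_
        simp only [Polynomial.natDegree_C, max_le_iff]
        constructor
        · omega
        · refine le_trans (Polynomial.natDegree_mul_le) ?_
          simp [Polynomial.natDegree_X_le]
    _ = ∑ i, α i := by simp
    _ ≤ P.totalDegree := by
        rw [show ∑ i, α i = α.sum fun _ e => e from
          (Finsupp.sum_fintype (f := α) (g := fun _ e => e) fun _ => rfl).symm]
        exact MvPolynomial.le_totalDegree hα

theorem stmt17 (n d : ℕ) (hn : 1 ≤ n) (hd : 1 ≤ d) :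
    ∃ c : ℝ, 0 < c ∧
      ∀ P : MvPolynomial (Fin n) ℂ, P.totalDegree = d → mvNorm P = 1 →
        ∀ v ∈ unitCube n,
          1 / (2 * (16 * ((d : ℝ) + n)) ^ n) ≤ Metric.infDist v (zeroSet P) →
          c ≤ ‖MvPolynomial.eval (fun i => v i) P‖ := by
  obtain ⟨c₂, hc₂, hgood⟩ := exists_good_point n d
  set R : ℝ := 1 / (2 * (16 * ((d : ℝ) + n)) ^ n) with hR
  have hd1 : (1:ℝ) ≤ (d:ℝ) := by exact_mod_cast hd
  have hn1 : (1:ℝ) ≤ (n:ℝ) := by exact_mod_cast hn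
  have hdn : (0:ℝ) < 16 * ((d:ℝ) + n) := by nlinarith
  have hR0 : 0 < R := by
    rw [hR]
    have : (0:ℝ) < (16 * ((d:ℝ) + n)) ^ n := pow_pos hdn n
    positivity
  have hs0 : 0 < Real.sqrt (2 * n) := Real.sqrt_pos.mpr (by nlinarith)
  set r : ℝ := R / (2 * Real.sqrt (2 * n)) with hr
  have hr0 : 0 < r := div_pos hR0 (by positivity)
  refine ⟨c₂ * (r / (1 + r)) ^ d, by positivity, ?_⟩
  intro P hdeg hnorm v hv hdist
  obtain ⟨z, hzK, hz⟩ := hgood P (le_of_eq hdeg) hnorm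
  set w : EuclideanSpace ℂ (Fin n) := z - v with hw
  have hfrac1 : (r / (1 + r)) ^ d ≤ 1 := by
    refine pow_le_one₀ (by positivity) ?_
    rw [div_le_one (by linarith)]
    linarith
  by_cases hw0 : w = 0
  · have hzv : z = v := by rwa [hw, sub_eq_zero] at hw0
    calc c₂ * (r / (1 + r)) ^ d ≤ c₂ * 1 := mul_le_mul_of_nonneg_left hfrac1 hc₂.le
      _ = c₂ := mul_one _
      _ ≤ _ := by rw [← hzv]; exact hz
  · set q := lineRestrict P v w with hq
    have hq1 : Polynomial.eval 1 q = MvPolynomial.eval (fun i => z i) P := by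
      rw [hq, lineRestrict_eval]
      have hfe : (fun i => v i + w i * 1) = (fun i => z i) := by
        funext i
        have : w i = z i - v i := rfl
        rw [this]; ring
      rw [hfe]
    have hpn : c₂ ≤ polyNorm q := by
      refine le_trans ?_ (abs_eval_one_le q)
      rw [hq1]; exact hz
    have hqne : q ≠ 0 := by
      intro h
      rw [h] at hpn
      have : polyNorm (0 : Polynomial ℂ) = 0 := by simp [polyNorm]
      rw [this] at hpn
      linarith
    have hdq : q.natDegree ≤ d := by
      rw [hq]
      exact le_trans (lineRestrict_natDegree_le P v w) (le_of_eq hdeg)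
    have hwnorm : ‖w‖ ≤ 2 * Real.sqrt (2 * n) := by
      calc ‖w‖ ≤ ‖z‖ + ‖v‖ := norm_sub_le _ _
        _ ≤ Real.sqrt (2 * n) + Real.sqrt (2 * n) :=
            add_le_add (norm_le_of_mem_cube hzK) (norm_le_of_mem_cube hv)
        _ = 2 * Real.sqrt (2 * n) := by ring
    have hroots : ∀ t : ℂ, q.IsRoot t → r ≤ ‖t‖ := by
      intro t ht
      have hy : MvPolynomial.eval (fun i => v i + w i * t) P = 0 := by
        rw [← lineRestrict_eval]; exact ht
      set y : EuclideanSpace ℂ (Fin n) := v + t • w with hyd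
      have hymem : y ∈ zeroSet P := by
        show MvPolynomial.eval (fun i => y i) P = 0
        have hfe : (fun i => y i) = (fun i => v i + w i * t) := by
          funext i
          have : y i = v i + t * w i := rfl
          rw [this]; ring
        rw [hfe]
        exact hy
      have h1 : R ≤ dist v y := le_trans hdist (Metric.infDist_le_dist_of_mem hymem)
      have h2 : dist v y = ‖t‖ * ‖w‖ := by
        rw [dist_eq_norm, hyd, show v - (v + t • w) = -(t • w) by abel, norm_neg,
          norm_smul]
      rw [h2] at h1
      rw [hr, div_le_iff₀ (by positivity)]
      calc R ≤ ‖t‖ * ‖w‖ := h1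
        _ ≤ ‖t‖ * (2 * Real.sqrt (2 * n)) :=
            mul_le_mul_of_nonneg_left hwnorm (norm_nonneg _)
    have hkey := key1 hqne hdq hr0 hroots
    have hq0 : Polynomial.eval 0 q = MvPolynomial.eval (fun i => v i) P := by
      rw [hq, lineRestrict_eval]
      have hfe : (fun i => v i + w i * 0) = (fun i => v i) := by
        funext i; ring
      rw [hfe]
    calc c₂ * (r / (1 + r)) ^ d = (r / (1 + r)) ^ d * c₂ := mul_comm _ _
      _ ≤ (r / (1 + r)) ^ d * polyNorm q := mul_le_mul_of_nonneg_left hpn (by positivity)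
      _ ≤ ‖Polynomial.eval 0 q‖ := hkey
      _ = _ := by rw [hq0]
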